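/- Let r > 1 and M > 0. Suppose g : ℝ → ℝ is measurable, odd (g(−y) = −g(y) for all y ∈ ℝ), and satisfies |g(y)| ≤ M⟨y⟩^{−r} for all y ∈ ℝ. Then g is integrable on ℝ, and there exists a constant C > 0, depending only on r, such that for all x ∈ ℝ, |∫_{−∞}^x g(y) dy| ≤ C M ⟨x⟩^{−(r−1)}. -/
import Mathlib

open MeasureTheory Set

private theorem shiftEq3 (a : ℝ) (f : ℝ → ℝ) :
    ∫ y in Ioi a, f (y + 1) = ∫ t in Ioi (a + 1), f t := by
  have A : MeasurableEmbedding fun x : ℝ => x + 1 :=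
    (Homeomorph.addRight (1:ℝ)).isClosedEmbedding.measurableEmbedding
  have h := A.setIntegral_map (μ := volume) f (Ioi (a + 1))
  rw [map_add_right_eq_self volume 1] at h
  rw [h]
  congr 1
  ext x
  simp

private theorem shiftInt3 (a : ℝ) (f : ℝ → ℝ) (h : IntegrableOn f (Ioi (a+1))) :
    IntegrableOn (fun y => f (y + 1)) (Ioi a) := by
  have A : MeasurableEmbedding fun x : ℝ => x + 1 :=
    (Homeomorph.addRight (1:ℝ)).isClosedEmbedding.measurableEmbedding
  have hmap : Measure.map (fun x : ℝ => x + 1) (volume.restrict (Ioi a))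
      = volume.restrict (Ioi (a + 1)) := by
    rw [show Ioi a = (fun x : ℝ => x + 1) ⁻¹' (Ioi (a+1)) by ext x; simp,
      ← Measure.restrict_map A.measurable measurableSet_Ioi, map_add_right_eq_self volume 1]
  have h2 := A.integrable_map_iff (g := f) (μ := volume.restrict (Ioi a))
  rw [hmap] at h2
  exact h2.mp h

private theorem phiInt3 {r : ℝ} (hr : 1 < r) :
    Integrable (fun y : ℝ => Real.sqrt (1 + y ^ 2) ^ (-r)) := by
  have h := integrable_rpow_neg_one_add_norm_sq (E := ℝ) (μ := volume) (r := r)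
    (by simpa using hr)
  refine h.congr ?_
  filter_upwards with y
  rw [Real.norm_eq_abs, sq_abs, Real.sqrt_eq_rpow, ← Real.rpow_mul (by positivity)]
  congr 1
  ring

private theorem tail3 {r : ℝ} (hr : 1 < r) (a : ℝ) (ha : 0 ≤ a) :
    ∫ y in Ioi a, Real.sqrt (1 + y ^ 2) ^ (-r)
      ≤ (2 : ℝ) ^ (r / 2) / (r - 1) * Real.sqrt (1 + a ^ 2) ^ (-(r - 1)) := by
  have hrneg : -r < -1 := by linarith
  have hr1 : (0:ℝ) < r - 1 := by linarith
  have hc2 : (0:ℝ) < (2:ℝ) ^ (r/2) := Real.rpow_pos_of_pos two_pos _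
  -- pointwise bound
  have hpt : ∀ y : ℝ, 0 ≤ y →
      Real.sqrt (1 + y ^ 2) ^ (-r) ≤ (2:ℝ) ^ (r/2) * (y + 1) ^ (-r) := by
    intro y hy
    have h1 : (0:ℝ) < y + 1 := by linarith
    have h2 : y + 1 ≤ Real.sqrt 2 * Real.sqrt (1 + y ^ 2) := by
      have hsq : (y + 1) ^ 2 ≤ 2 * (1 + y ^ 2) := by nlinarith [sq_nonneg (1 - y)]
      calc y + 1 = Real.sqrt ((y + 1) ^ 2) := (Real.sqrt_sq (by linarith)).symm
        _ ≤ Real.sqrt (2 * (1 + y ^ 2)) := Real.sqrt_le_sqrt hsq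
        _ = Real.sqrt 2 * Real.sqrt (1 + y ^ 2) := Real.sqrt_mul (by norm_num) _
    have key := Real.rpow_le_rpow_of_nonpos h1 h2 (by linarith : -r ≤ 0)
    rw [Real.mul_rpow (Real.sqrt_nonneg 2) (Real.sqrt_nonneg _)] at key
    have hs2 : Real.sqrt 2 ^ (-r) = (2:ℝ) ^ (-(r/2)) := by
      rw [Real.sqrt_eq_rpow, ← Real.rpow_mul (by norm_num)]
      congr 1; ring
    rw [hs2] at key
    have := mul_le_mul_of_nonneg_left key hc2.le
    calc Real.sqrt (1 + y ^ 2) ^ (-r)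
        = (2:ℝ) ^ (r/2) * ((2:ℝ) ^ (-(r/2)) * Real.sqrt (1 + y ^ 2) ^ (-r)) := by
          rw [← mul_assoc, ← Real.rpow_add two_pos]
          simp
      _ ≤ (2:ℝ) ^ (r/2) * (y + 1) ^ (-r) := this
  -- integrability of the comparison function
  have hIntR : IntegrableOn (fun y : ℝ => (y + 1) ^ (-r)) (Ioi a) :=
    shiftInt3 a (fun t => t ^ (-r)) (integrableOn_Ioi_rpow_of_lt hrneg (by linarith))
  -- value of the comparison integral
  have hval : ∫ y in Ioi a, (y + 1) ^ (-r) = (a + 1) ^ (-r + 1) / (r - 1) := by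
    rw [shiftEq3 a (fun t => t ^ (-r)),
      integral_Ioi_rpow_of_lt hrneg (by linarith : (0:ℝ) < a + 1)]
    rw [show -r + 1 = -(r - 1) by ring]
    rw [div_eq_div_iff (by linarith) (by linarith)]
    ring
  have hmono : ∫ y in Ioi a, Real.sqrt (1 + y ^ 2) ^ (-r)
      ≤ ∫ y in Ioi a, (2:ℝ) ^ (r/2) * (y + 1) ^ (-r) := by
    refine setIntegral_mono_on ((phiInt3 hr).integrableOn) (hIntR.const_mul _)
      measurableSet_Ioi ?_
    intro y hy
    exact hpt y (le_trans ha (le_of_lt hy))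
  have hcmp : (a + 1) ^ (-r + 1) ≤ Real.sqrt (1 + a ^ 2) ^ (-(r - 1)) := by
    have hspos : (0:ℝ) < Real.sqrt (1 + a ^ 2) := Real.sqrt_pos.mpr (by positivity)
    have hs : Real.sqrt (1 + a ^ 2) ≤ a + 1 := by
      calc Real.sqrt (1 + a ^ 2) ≤ Real.sqrt ((a + 1) ^ 2) :=
            Real.sqrt_le_sqrt (by nlinarith)
        _ = a + 1 := Real.sqrt_sq (by linarith)
    have := Real.rpow_le_rpow_of_nonpos hspos hs (by linarith : -(r - 1) ≤ 0)
    rw [show -r + 1 = -(r - 1) by ring]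
    exact this
  calc ∫ y in Ioi a, Real.sqrt (1 + y ^ 2) ^ (-r)
      ≤ ∫ y in Ioi a, (2:ℝ) ^ (r/2) * (y + 1) ^ (-r) := hmono
    _ = (2:ℝ) ^ (r/2) * ((a + 1) ^ (-r + 1) / (r - 1)) := by
        rw [integral_const_mul, hval]
    _ = (2:ℝ) ^ (r/2) / (r - 1) * (a + 1) ^ (-r + 1) := by ring
    _ ≤ (2:ℝ) ^ (r/2) / (r - 1) * Real.sqrt (1 + a ^ 2) ^ (-(r - 1)) := by
        exact mul_le_mul_of_nonneg_left hcmp (by positivity)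

/-- Lemma 3.3: antiderivatives of odd, algebraically localized functions retain
algebraic localization with one power less. Here `⟨y⟩ = (1+y²)^{1/2}`. -/
theorem stmt_3 (r : ℝ) (hr : 1 < r) :
    ∃ C > (0:ℝ), ∀ (M : ℝ) (g : ℝ → ℝ), 0 < M → Measurable g →
      (∀ y : ℝ, g (-y) = -g y) →
      (∀ y : ℝ, |g y| ≤ M * Real.sqrt (1 + y ^ 2) ^ (-r)) →
      Integrable g ∧
        ∀ x : ℝ, |∫ y in Iic x, g y| ≤ C * M * Real.sqrt (1 + x ^ 2) ^ (-(r - 1)) := by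
  have hr1 : (0:ℝ) < r - 1 := by linarith
  refine ⟨(2:ℝ) ^ (r/2) / (r - 1), by positivity, ?_⟩
  intro M g hM hmeas hodd hbound
  set φ : ℝ → ℝ := fun y => Real.sqrt (1 + y ^ 2) ^ (-r) with hφ
  have hφ_int : Integrable φ := phiInt3 hr
  have hint : Integrable g := by
    refine (hφ_int.const_mul M).mono' hmeas.aestronglyMeasurable ?_
    filter_upwards with y
    simpa [Real.norm_eq_abs] using hbound y
  refine ⟨hint, fun x => ?_⟩
  have hφ_even : ∀ y : ℝ, φ (-y) = φ y := by
    intro y; simp [hφ, neg_sq]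
  have habsle : ∀ s : Set ℝ, MeasurableSet s → |∫ y in s, g y| ≤ M * ∫ y in s, φ y := by
    intro s hs
    calc |∫ y in s, g y| ≤ ∫ y in s, |g y| := by
          simpa [Real.norm_eq_abs] using
            norm_integral_le_integral_norm (μ := volume.restrict s) g
      _ ≤ ∫ y in s, M * φ y :=
          setIntegral_mono_on hint.abs.integrableOn ((hφ_int.const_mul M).integrableOn)
            hs (fun y _ => hbound y)
      _ = M * ∫ y in s, φ y := integral_const_mul _ _
  rcases le_or_gt 0 x with hx | hx
  · -- x ≥ 0 : use oddness
    have hzero : ∫ y, g y = 0 := by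
      have h1 : ∫ y, g (-y) = ∫ y, g y := integral_neg_eq_self g volume
      simp_rw [hodd, integral_neg] at h1
      linarith
    have hsplit := intervalIntegral.integral_Iic_add_Ioi (b := x) (μ := volume)
      hint.integrableOn hint.integrableOn
    have heq : ∫ y in Iic x, g y = -∫ y in Ioi x, g y := by
      rw [hzero] at hsplit; linarith
    rw [heq, abs_neg]
    calc |∫ y in Ioi x, g y| ≤ M * ∫ y in Ioi x, φ y := habsle _ measurableSet_Ioi
      _ ≤ M * ((2:ℝ) ^ (r/2) / (r - 1) * Real.sqrt (1 + x ^ 2) ^ (-(r - 1))) :=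
          mul_le_mul_of_nonneg_left (tail3 hr x hx) hM.le
      _ = (2:ℝ) ^ (r/2) / (r - 1) * M * Real.sqrt (1 + x ^ 2) ^ (-(r - 1)) := by ring
  · -- x < 0 : direct bound using evenness of φ
    have hIic : ∫ y in Iic x, φ y = ∫ y in Ioi (-x), φ y := by
      rw [← integral_comp_neg_Iic x φ]
      exact setIntegral_congr_fun measurableSet_Iic (fun y _ => (hφ_even y).symm)
    calc |∫ y in Iic x, g y| ≤ M * ∫ y in Iic x, φ y := habsle _ measurableSet_Iic
      _ = M * ∫ y in Ioi (-x), φ y := by rw [hIic]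
      _ ≤ M * ((2:ℝ) ^ (r/2) / (r - 1) * Real.sqrt (1 + (-x) ^ 2) ^ (-(r - 1))) :=
          mul_le_mul_of_nonneg_left (tail3 hr (-x) (by linarith)) hM.le
      _ = (2:ℝ) ^ (r/2) / (r - 1) * M * Real.sqrt (1 + x ^ 2) ^ (-(r - 1)) := by
          rw [neg_sq]; ring
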